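/- Let n₁, n₂, n₃ ≥ 1, let Z be a positive semidefinite matrix on ℂ^{n₁} and Θ a positive semidefinite matrix on ℂ^{n₃}. (i) For all unit vectors μ ∈ ℂ^{n₁}⊗ℂ^{n₂} and ν ∈ ℂ^{n₂}⊗ℂ^{n₃}, the trace Tr[ (|μ⟩⟨μ| ⊗ Θ) (Z ⊗ |ν⟩⟨ν|) ] of operators on ℂ^{n₁}⊗ℂ^{n₂}⊗ℂ^{n₃} is at most λ_max(Z)·λ_max(Θ), where λ_max denotes the largest eigenvalue. (ii) Equality holds for μ = e₁⊗ξ and ν = ξ⊗e₃, where e₁ is any unit eigenvector of Z with eigenvalue λ_max(Z), e₃ is any unit eigenvector of Θ with eigenvalue λ_max(Θ), and ξ is any unit vector in ℂ^{n₂}. -/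

import Mathlib

open Matrix ComplexOrder

/-- The operator |μ⟩⟨μ| ⊗ Θ on ℂ^{n₁}⊗ℂ^{n₂}⊗ℂ^{n₃}. -/
noncomputable def opA {n₁ n₂ n₃ : ℕ} (μ : Fin n₁ × Fin n₂ → ℂ)
    (Θ : Matrix (Fin n₃) (Fin n₃) ℂ) :
    Matrix (Fin n₁ × Fin n₂ × Fin n₃) (Fin n₁ × Fin n₂ × Fin n₃) ℂ :=
  Matrix.of fun p q =>
    μ (p.1, p.2.1) * (starRingEnd ℂ) (μ (q.1, q.2.1)) * Θ p.2.2 q.2.2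

/-- The operator Z ⊗ |ν⟩⟨ν| on ℂ^{n₁}⊗ℂ^{n₂}⊗ℂ^{n₃}. -/
noncomputable def opB {n₁ n₂ n₃ : ℕ} (Z : Matrix (Fin n₁) (Fin n₁) ℂ)
    (ν : Fin n₂ × Fin n₃ → ℂ) :
    Matrix (Fin n₁ × Fin n₂ × Fin n₃) (Fin n₁ × Fin n₂ × Fin n₃) ℂ :=
  Matrix.of fun p q =>
    Z p.1 q.1 * ν (p.2.1, p.2.2) * (starRingEnd ℂ) (ν (q.2.1, q.2.2))

section Aux

open Kronecker Finset

lemma aux_smul_one_sub_psd {n : ℕ} (Z : Matrix (Fin n) (Fin n) ℂ) (hZ : Z.PosSemidef) (c : ℝ)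
    (hc : ∀ (v : Fin n → ℂ) (c' : ℝ), v ≠ 0 → Z *ᵥ v = (c' : ℂ) • v → c' ≤ c) :
    ((c : ℂ) • 1 - Z).PosSemidef := by
  have hH := hZ.1
  have heig : ∀ i, hH.eigenvalues i ≤ c := by
    intro i
    refine hc (hH.eigenvectorBasis i) _ ?_ ?_
    · intro h
      exact hH.eigenvectorBasis.orthonormal.ne_zero i (by ext j; exact congrFun h j)
    · have := hH.mulVec_eigenvectorBasis i
      ext j
      simpa [Complex.real_smul] using congrFun this j
  set U : Matrix (Fin n) (Fin n) ℂ := ↑hH.eigenvectorUnitary with hUdef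
  have hUU : U * star U = 1 := (Matrix.mem_unitaryGroup_iff).mp hH.eigenvectorUnitary.2
  have key : (c : ℂ) • 1 - Z =
      U * diagonal (fun i => ((c - hH.eigenvalues i : ℝ) : ℂ)) * star U := by
    have hsp := hH.spectral_theorem
    have h1 : diagonal (fun i : Fin n => ((c - hH.eigenvalues i : ℝ) : ℂ)) =
        (c : ℂ) • 1 - diagonal (RCLike.ofReal ∘ hH.eigenvalues) := by
      rw [smul_one_eq_diagonal, diagonal_sub]
      congr 1 with i
      push_cast
      simp [Function.comp]
    rw [Unitary.conjStarAlgAut_apply, ← hUdef] at hsp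
    rw [h1, mul_sub, sub_mul, ← hsp]
    congr 1
    rw [mul_smul_comm, smul_mul_assoc, mul_one, hUU]
  rw [key, Matrix.star_eq_conjTranspose]
  exact (posSemidef_diagonal_iff.mpr fun i =>
    Complex.zero_le_real.mpr (by linarith [heig i])).mul_mul_conjTranspose_same U

lemma aux_kron_psd {m n : ℕ} {A : Matrix (Fin m) (Fin m) ℂ} {B : Matrix (Fin n) (Fin n) ℂ}
    (hA : A.PosSemidef) (hB : B.PosSemidef) : (A ⊗ₖ B).PosSemidef := by
  exact hA.kronecker hB

lemma aux_transpose_eig {n : ℕ} {Θ : Matrix (Fin n) (Fin n) ℂ} (hΘ : Θ.IsHermitian)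
    {e : Fin n → ℂ} {t : ℝ} (he : Θ *ᵥ e = (t : ℂ) • e) :
    Θᵀ *ᵥ (star e) = (t : ℂ) • star e := by
  ext k
  have h1 : ∀ k' , Θᵀ k k' = (starRingEnd ℂ) (Θ k k') := by
    intro k'
    rw [transpose_apply]
    conv_lhs => rw [← hΘ.eq]
    simp [conjTranspose_apply]
  have h2 := congrFun he k
  simp only [mulVec, dotProduct, Pi.smul_apply, smul_eq_mul] at h2 ⊢
  calc ∑ k', Θᵀ k k' * star e k'
      = ∑ k', (starRingEnd ℂ) (Θ k k' * e k') := by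
        refine Finset.sum_congr rfl fun k' _ => ?_
        rw [h1 k', _root_.map_mul]
        rfl
    _ = (starRingEnd ℂ) (∑ k', Θ k k' * e k') := (map_sum _ _ _).symm
    _ = (t : ℂ) * (star e k) := by rw [h2]; simp

lemma aux_swap1 {A B C D E F : Type*} [Fintype A] [Fintype B] [Fintype C] [Fintype D]
    [Fintype E] [Fintype F] (t : A → B → C → D → E → F → ℂ) :
    (∑ a, ∑ b, ∑ c, ∑ d, ∑ e, ∑ f, t a b c d e f)
      = ∑ d, ∑ f, ∑ a, ∑ c, ∑ b, ∑ e, t a b c d e f := by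
  have h1 : (∑ x : A × B × C × D × E × F,
      t x.1 x.2.1 x.2.2.1 x.2.2.2.1 x.2.2.2.2.1 x.2.2.2.2.2)
      = ∑ a, ∑ b, ∑ c, ∑ d, ∑ e, ∑ f, t a b c d e f := by
    simp [Fintype.sum_prod_type]
  have h2 : (∑ y : D × F × A × C × B × E,
      t y.2.2.1 y.2.2.2.2.1 y.2.2.2.1 y.1 y.2.2.2.2.2 y.2.1)
      = ∑ d, ∑ f, ∑ a, ∑ c, ∑ b, ∑ e, t a b c d e f := by
    simp [Fintype.sum_prod_type]
  rw [← h1, ← h2]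
  exact Fintype.sum_equiv
    ⟨fun x => (x.2.2.2.1, x.2.2.2.2.2, x.1, x.2.2.1, x.2.1, x.2.2.2.2.1),
     fun y => (y.2.2.1, y.2.2.2.2.1, y.2.2.2.1, y.1, y.2.2.2.2.2, y.2.1),
     fun _ => rfl, fun _ => rfl⟩ _ _ (fun _ => rfl)

lemma aux_swap2 {A B C D E F : Type*} [Fintype A] [Fintype B] [Fintype C] [Fintype D]
    [Fintype E] [Fintype F] (t : A → B → C → D → E → F → ℂ) :
    (∑ a, ∑ b, ∑ c, ∑ d, ∑ e, ∑ f, t a b c d e f)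
      = ∑ d, ∑ a, ∑ c, ∑ f, ∑ b, ∑ e, t a b c d e f := by
  have h1 : (∑ x : A × B × C × D × E × F,
      t x.1 x.2.1 x.2.2.1 x.2.2.2.1 x.2.2.2.2.1 x.2.2.2.2.2)
      = ∑ a, ∑ b, ∑ c, ∑ d, ∑ e, ∑ f, t a b c d e f := by
    simp [Fintype.sum_prod_type]
  have h2 : (∑ y : D × A × C × F × B × E,
      t y.2.1 y.2.2.2.2.1 y.2.2.1 y.1 y.2.2.2.2.2 y.2.2.2.1)
      = ∑ d, ∑ a, ∑ c, ∑ f, ∑ b, ∑ e, t a b c d e f := by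
    simp [Fintype.sum_prod_type]
  rw [← h1, ← h2]
  exact Fintype.sum_equiv
    ⟨fun x => (x.2.2.2.1, x.1, x.2.2.1, x.2.2.2.2.2, x.2.1, x.2.2.2.2.1),
     fun y => (y.2.1, y.2.2.2.2.1, y.2.2.1, y.1, y.2.2.2.2.2, y.2.2.2.1),
     fun _ => rfl, fun _ => rfl⟩ _ _ (fun _ => rfl)

lemma aux_swap3 {A B C D E F : Type*} [Fintype A] [Fintype B] [Fintype C] [Fintype D]
    [Fintype E] [Fintype F] (t : A → B → C → D → E → F → ℂ) :
    (∑ a, ∑ b, ∑ c, ∑ d, ∑ e, ∑ f, t a b c d e f)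
      = ∑ f, ∑ e, ∑ c, ∑ d, ∑ a, ∑ b, t a b c d e f := by
  have h1 : (∑ x : A × B × C × D × E × F,
      t x.1 x.2.1 x.2.2.1 x.2.2.2.1 x.2.2.2.2.1 x.2.2.2.2.2)
      = ∑ a, ∑ b, ∑ c, ∑ d, ∑ e, ∑ f, t a b c d e f := by
    simp [Fintype.sum_prod_type]
  have h2 : (∑ y : F × E × C × D × A × B,
      t y.2.2.2.2.1 y.2.2.2.2.2 y.2.2.1 y.2.2.2.1 y.2.1 y.1)
      = ∑ f, ∑ e, ∑ c, ∑ d, ∑ a, ∑ b, t a b c d e f := by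
    simp [Fintype.sum_prod_type]
  rw [← h1, ← h2]
  exact Fintype.sum_equiv
    ⟨fun x => (x.2.2.2.2.2, x.2.2.2.2.1, x.2.2.1, x.2.2.2.1, x.1, x.2.1),
     fun y => (y.2.2.2.2.1, y.2.2.2.2.2, y.2.2.1, y.2.2.2.1, y.2.1, y.1),
     fun _ => rfl, fun _ => rfl⟩ _ _ (fun _ => rfl)

lemma aux_trace_expand {n₁ n₂ n₃ : ℕ} (Z : Matrix (Fin n₁) (Fin n₁) ℂ)
    (Θ : Matrix (Fin n₃) (Fin n₃) ℂ) (μ : Fin n₁ × Fin n₂ → ℂ) (ν : Fin n₂ × Fin n₃ → ℂ) :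
    (opA μ Θ * opB Z ν).trace =
      ∑ a : Fin n₁, ∑ b : Fin n₂, ∑ c : Fin n₃, ∑ d : Fin n₁, ∑ e : Fin n₂, ∑ f : Fin n₃,
        μ (a, b) * (starRingEnd ℂ) (μ (d, e)) * Θ c f *
          (Z d a * ν (e, f) * (starRingEnd ℂ) (ν (b, c))) := by
  simp only [Matrix.trace, Matrix.diag, Matrix.mul_apply, opA, opB, Matrix.of_apply,
    Fintype.sum_prod_type]

lemma aux_trace_eq_quadform {n₁ n₂ n₃ : ℕ} (Z : Matrix (Fin n₁) (Fin n₁) ℂ)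
    (Θ : Matrix (Fin n₃) (Fin n₃) ℂ) (μ : Fin n₁ × Fin n₂ → ℂ) (ν : Fin n₂ × Fin n₃ → ℂ) :
    (opA μ Θ * opB Z ν).trace =
      star (fun p : Fin n₁ × Fin n₃ => ∑ j, μ (p.1, j) * star (ν (j, p.2))) ⬝ᵥ
        ((Z ⊗ₖ Θᵀ) *ᵥ fun p : Fin n₁ × Fin n₃ => ∑ j, μ (p.1, j) * star (ν (j, p.2))) := by
  rw [aux_trace_expand, aux_swap1]
  simp only [dotProduct, mulVec, kroneckerMap_apply, transpose_apply, Pi.star_apply,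
    star_sum, star_mul', star_star, Fintype.sum_prod_type, Finset.sum_mul, Finset.mul_sum]
  refine Finset.sum_congr rfl fun d _ => Finset.sum_congr rfl fun f _ =>
    Finset.sum_congr rfl fun a _ => Finset.sum_congr rfl fun c _ =>
    Finset.sum_congr rfl fun b _ => Finset.sum_congr rfl fun e _ => ?_
  simp only [starRingEnd_apply]
  ring

lemma aux_dot_self {ι : Type*} [Fintype ι] (e : ι → ℂ) :
    star e ⬝ᵥ e = ((∑ i, Complex.normSq (e i) : ℝ) : ℂ) := by
  simp only [dotProduct, Pi.star_apply, Complex.star_def]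
  push_cast
  exact Finset.sum_congr rfl fun i _ => Complex.normSq_eq_conj_mul_self.symm


lemma aux_quad_eig {n : ℕ} (M : Matrix (Fin n) (Fin n) ℂ) (e : Fin n → ℂ) (c : ℝ)
    (heig : M *ᵥ e = (c : ℂ) • e) (hnorm : ∑ i, Complex.normSq (e i) = 1) :
    (∑ d, ∑ a, (starRingEnd ℂ) (e d) * M d a * e a) = (c : ℂ) := by
  have h1 : ∀ d, (∑ a, (starRingEnd ℂ) (e d) * M d a * e a)
      = (starRingEnd ℂ) (e d) * ((c : ℂ) * e d) := by
    intro d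
    rw [show (∑ a, (starRingEnd ℂ) (e d) * M d a * e a)
        = (starRingEnd ℂ) (e d) * ∑ a, M d a * e a by
      rw [Finset.mul_sum]; exact Finset.sum_congr rfl fun a _ => by ring]
    have h2 := congrFun heig d
    simp only [mulVec, dotProduct, Pi.smul_apply, smul_eq_mul] at h2
    rw [h2]
  simp only [h1]
  have h3 : ∑ d, (starRingEnd ℂ) (e d) * ((c : ℂ) * e d)
      = (c : ℂ) * ∑ d, (starRingEnd ℂ) (e d) * e d := by
    rw [Finset.mul_sum]; exact Finset.sum_congr rfl fun d _ => by ring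
  rw [h3]
  have hsum : (∑ d, (starRingEnd ℂ) (e d) * e d) = 1 := by
    have h4 := aux_dot_self e
    rw [hnorm] at h4
    simpa [dotProduct, Pi.star_apply, Complex.star_def] using h4
  rw [hsum, mul_one]

end Aux

section Main
open Kronecker Finset

/-- Tr[(|μ⟩⟨μ|⊗Θ)(Z⊗|ν⟩⟨ν|)] ≤ λ_max(Z)·λ_max(Θ) for all unit vectors μ, ν, with
equality for μ = e₁⊗ξ, ν = ξ⊗e₃ built from top eigenvectors e₁ of Z and e₃ of Θ. -/
theorem stmt8 (n₁ n₂ n₃ : ℕ) (h₁ : 1 ≤ n₁) (h₂ : 1 ≤ n₂) (h₃ : 1 ≤ n₃)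
    (Z : Matrix (Fin n₁) (Fin n₁) ℂ) (Θ : Matrix (Fin n₃) (Fin n₃) ℂ)
    (hZ : Z.PosSemidef) (hΘ : Θ.PosSemidef)
    (zmax tmax : ℝ)
    (e₁ : Fin n₁ → ℂ) (he₁ : ∑ i, Complex.normSq (e₁ i) = 1)
    (he₁eig : Z *ᵥ e₁ = (zmax : ℂ) • e₁)
    (hzmax : ∀ (v : Fin n₁ → ℂ) (c : ℝ), v ≠ 0 → Z *ᵥ v = (c : ℂ) • v → c ≤ zmax)
    (e₃ : Fin n₃ → ℂ) (he₃ : ∑ i, Complex.normSq (e₃ i) = 1)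
    (he₃eig : Θ *ᵥ e₃ = (tmax : ℂ) • e₃)
    (htmax : ∀ (v : Fin n₃ → ℂ) (c : ℝ), v ≠ 0 → Θ *ᵥ v = (c : ℂ) • v → c ≤ tmax) :
    (∀ (μ : Fin n₁ × Fin n₂ → ℂ) (ν : Fin n₂ × Fin n₃ → ℂ),
        ∑ p, Complex.normSq (μ p) = 1 → ∑ p, Complex.normSq (ν p) = 1 →
        ((opA μ Θ * opB Z ν).trace).re ≤ zmax * tmax) ∧
    (∀ ξ : Fin n₂ → ℂ, ∑ j, Complex.normSq (ξ j) = 1 →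
        (opA (fun p => e₁ p.1 * ξ p.2) Θ *
          opB Z (fun p => ξ p.1 * e₃ p.2)).trace = ((zmax * tmax : ℝ) : ℂ)) := by
  have hz0 : 0 ≤ zmax := by
    have h := hZ.dotProduct_mulVec_nonneg e₁
    rw [he₁eig, dotProduct_smul, aux_dot_self, he₁] at h
    simpa [Complex.zero_le_real] using h
  have ht0 : 0 ≤ tmax := by
    have h := hΘ.dotProduct_mulVec_nonneg e₃
    rw [he₃eig, dotProduct_smul, aux_dot_self, he₃] at h
    simpa [Complex.zero_le_real] using h
  have hΘT : Θᵀ.PosSemidef := hΘ.transpose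
  have hP1 : ((zmax : ℂ) • 1 - Z).PosSemidef := aux_smul_one_sub_psd Z hZ zmax hzmax
  have hP2 : ((tmax : ℂ) • 1 - Θᵀ).PosSemidef := by
    refine aux_smul_one_sub_psd Θᵀ hΘT tmax ?_
    intro v c hv hveq
    refine htmax (star v) c (fun h0 => hv ?_) ?_
    · have := congrArg star h0
      simpa using this
    · have := aux_transpose_eig hΘT.1 hveq
      rwa [transpose_transpose] at this
  have hzsmul : ((zmax : ℂ) • (1 : Matrix (Fin n₁) (Fin n₁) ℂ)).PosSemidef := by
    rw [smul_one_eq_diagonal]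
    exact posSemidef_diagonal_iff.mpr fun i => Complex.zero_le_real.mpr hz0
  have hPsum := (aux_kron_psd hP1 hΘT).add (aux_kron_psd hzsmul hP2)
  have hPeq : (((zmax * tmax : ℝ) : ℂ)) • (1 : Matrix (Fin n₁ × Fin n₃) (Fin n₁ × Fin n₃) ℂ)
      - Z ⊗ₖ Θᵀ
      = (((zmax : ℂ) • 1 - Z) ⊗ₖ Θᵀ) + (((zmax : ℂ) • 1) ⊗ₖ ((tmax : ℂ) • 1 - Θᵀ)) := by
    ext ⟨i, k⟩ ⟨i', k'⟩
    simp only [Matrix.sub_apply, Matrix.add_apply, Matrix.smul_apply, kroneckerMap_apply,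
      Matrix.one_apply, smul_eq_mul, Prod.mk.injEq]
    by_cases hii : i = i' <;> by_cases hkk : k = k' <;>
      simp [hii, hkk, Prod.ext_iff] <;> push_cast <;> ring
  have hP : ((((zmax * tmax : ℝ) : ℂ)) • (1 : Matrix (Fin n₁ × Fin n₃) (Fin n₁ × Fin n₃) ℂ)
      - Z ⊗ₖ Θᵀ).PosSemidef := by
    rw [hPeq]; exact hPsum
  constructor
  · -- part (i)
    intro μ ν hμ hν
    set v : Fin n₁ × Fin n₃ → ℂ := fun p => ∑ j, μ (p.1, j) * star (ν (j, p.2)) with hv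
    have htr := aux_trace_eq_quadform Z Θ μ ν
    rw [← hv] at htr
    have hquad := hP.dotProduct_mulVec_nonneg v
    rw [sub_mulVec, smul_mulVec, one_mulVec, dotProduct_sub, dotProduct_smul,
      aux_dot_self v, smul_eq_mul] at hquad
    have hre := (Complex.le_def.mp hquad).1
    simp only [Complex.zero_re, Complex.sub_re, ← Complex.ofReal_mul, Complex.ofReal_re] at hre
    rw [htr]
    have hr1 : (∑ x, Complex.normSq (v x)) ≤ 1 := by
      have key : ∀ p : Fin n₁ × Fin n₃, Complex.normSq (v p) ≤
          (∑ j, Complex.normSq (μ (p.1, j))) * (∑ j, Complex.normSq (ν (j, p.2))) := by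
        intro p
        have h1 : ‖v p‖ ≤ ∑ j, ‖μ (p.1, j)‖ * ‖ν (j, p.2)‖ := by
          refine (norm_sum_le _ _).trans (le_of_eq ?_)
          refine Finset.sum_congr rfl fun j _ => ?_
          rw [norm_mul]
          congr 1
          exact Complex.norm_conj _
        have h2 := Finset.sum_mul_sq_le_sq_mul_sq Finset.univ
          (fun j => ‖μ (p.1, j)‖) (fun j => ‖ν (j, p.2)‖)
        calc Complex.normSq (v p) = (‖v p‖) ^ 2 := (Complex.sq_norm _).symm
          _ ≤ (∑ j, ‖μ (p.1, j)‖ * ‖ν (j, p.2)‖) ^ 2 := by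
              exact pow_le_pow_left₀ (norm_nonneg _) h1 2
          _ ≤ (∑ j, (‖μ (p.1, j)‖) ^ 2) * (∑ j, (‖ν (j, p.2)‖) ^ 2) := h2
          _ = (∑ j, Complex.normSq (μ (p.1, j))) * (∑ j, Complex.normSq (ν (j, p.2))) := by
              simp [Complex.sq_norm]
      have hμ' : (∑ i, ∑ j, Complex.normSq (μ (i, j))) = 1 := by
        rw [← hμ]; exact (Fintype.sum_prod_type (fun p : Fin n₁ × Fin n₂ => Complex.normSq (μ p))).symm
      have hν' : (∑ k : Fin n₃, ∑ j : Fin n₂, Complex.normSq (ν (j, k))) = 1 := by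
        rw [← hν, Finset.sum_comm]
        exact (Fintype.sum_prod_type (fun p : Fin n₂ × Fin n₃ => Complex.normSq (ν p))).symm
      calc (∑ x, Complex.normSq (v x))
          ≤ ∑ x : Fin n₁ × Fin n₃,
              (∑ j, Complex.normSq (μ (x.1, j))) * (∑ j, Complex.normSq (ν (j, x.2))) :=
            Finset.sum_le_sum fun x _ => key x
        _ = ∑ i : Fin n₁, ∑ k : Fin n₃,
              (∑ j, Complex.normSq (μ (i, j))) * (∑ j, Complex.normSq (ν (j, k))) :=
            Fintype.sum_prod_type _
        _ = (∑ i, ∑ j, Complex.normSq (μ (i, j))) * (∑ k : Fin n₃, ∑ j : Fin n₂, Complex.normSq (ν (j, k))) :=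
            (Finset.sum_mul_sum _ _ _ _).symm
        _ = 1 := by rw [hμ', hν']; norm_num
    have hmul : zmax * tmax * (∑ x, Complex.normSq (v x)) ≤ zmax * tmax := by
      have := mul_le_mul_of_nonneg_left hr1 (mul_nonneg hz0 ht0)
      simpa using this
    linarith
  · -- part (ii)
    intro ξ hξ
    have hF1 := aux_quad_eig Z e₁ zmax he₁eig he₁
    have hF2 := aux_quad_eig Θ e₃ tmax he₃eig he₃
    have hF3 : (∑ b, ξ b * (starRingEnd ℂ) (ξ b)) = 1 := by
      calc (∑ b, ξ b * (starRingEnd ℂ) (ξ b))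
          = ((∑ b, Complex.normSq (ξ b) : ℝ) : ℂ) := by
            push_cast
            exact Finset.sum_congr rfl fun b _ => Complex.mul_conj _
        _ = 1 := by rw [hξ]; norm_num
    have hF4 : (∑ e, (starRingEnd ℂ) (ξ e) * ξ e) = 1 := by
      calc (∑ e, (starRingEnd ℂ) (ξ e) * ξ e)
          = ((∑ e, Complex.normSq (ξ e) : ℝ) : ℂ) := by
            push_cast
            exact Finset.sum_congr rfl fun e _ => Complex.normSq_eq_conj_mul_self.symm
        _ = 1 := by rw [hξ]; norm_num
    rw [aux_trace_expand, aux_swap2,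
      show ((zmax * tmax : ℝ) : ℂ)
          = (∑ d, ∑ a, (starRingEnd ℂ) (e₁ d) * Z d a * e₁ a) *
            ((∑ c, ∑ f, (starRingEnd ℂ) (e₃ c) * Θ c f * e₃ f) *
              ((∑ b, ξ b * (starRingEnd ℂ) (ξ b)) * (∑ e, (starRingEnd ℂ) (ξ e) * ξ e))) from by
        rw [hF1, hF2, hF3, hF4]; push_cast; ring]
    refine Eq.trans (aux_swap3 (fun d a c f b e =>
      e₁ a * ξ b * (starRingEnd ℂ) (e₁ d * ξ e) * Θ c f *
        (Z d a * (ξ e * e₃ f) * (starRingEnd ℂ) (ξ b * e₃ c)))) ?_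
    simp only [Finset.sum_mul, Finset.mul_sum]
    refine Finset.sum_congr rfl fun e _ => Finset.sum_congr rfl fun b _ =>
      Finset.sum_congr rfl fun c _ => Finset.sum_congr rfl fun f _ =>
      Finset.sum_congr rfl fun d _ => Finset.sum_congr rfl fun a _ => ?_
    simp only [_root_.map_mul]
    ring

end Main
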